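/- Let n ≥ 2 and let F : ℝ^n → ℝ^n be a continuously differentiable vector field that is integrable on ℝ^n and divergence-free: Σ_{i=1}^n ∂F_i/∂x_i = 0 everywhere. Then ∫_{ℝ^n} F_i(x) dx = 0 for every i = 1, …, n. -/

import Mathlib

open MeasureTheory Metric Set Filter

local notation "𝔼" n => EuclideanSpace ℝ (Fin n)

lemma coord_abs_le_norm {n : ℕ} (x : 𝔼 n) (i : Fin n) : |x i| ≤ ‖x‖ := by
  have h : ‖x i‖ ^ 2 ≤ ‖x‖ ^ 2 := by
    rw [EuclideanSpace.norm_eq, Real.sq_sqrt (by positivity)]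
    exact Finset.single_le_sum (f := fun j => ‖x j‖^2) (fun j _ => by positivity)
      (Finset.mem_univ i)
  rw [Real.norm_eq_abs] at h
  nlinarith [abs_nonneg (x i), norm_nonneg x]

lemma norm_inv_smul {n : ℕ} (R : ℝ) (hR : 0 < R) (x : 𝔼 n) :
    ‖R⁻¹ • x‖ = ‖x‖ / R := by
  rw [norm_smul, Real.norm_eq_abs, abs_inv, abs_of_pos hR, inv_mul_eq_div]

lemma fderiv_bump_eq_zero_inner {n : ℕ} (ψ : ContDiffBump (0 : 𝔼 n)) (x : 𝔼 n)
    (h : ‖x‖ < ψ.rIn) : fderiv ℝ ψ x = 0 := by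
  have he : (⇑ψ) =ᶠ[nhds x] (fun _ => (1:ℝ)) := by
    filter_upwards [Metric.ball_mem_nhds x (by linarith : (0:ℝ) < ψ.rIn - ‖x‖)] with y hy
    apply ψ.one_of_mem_closedBall
    rw [Metric.mem_ball, dist_eq_norm] at hy
    rw [Metric.mem_closedBall, dist_zero_right]
    have := norm_sub_norm_le y x
    linarith
  rw [he.fderiv_eq, fderiv_fun_const]
  rfl

lemma fderiv_bump_eq_zero_outer {n : ℕ} (ψ : ContDiffBump (0 : 𝔼 n)) (x : 𝔼 n)
    (h : ψ.rOut < ‖x‖) : fderiv ℝ ψ x = 0 := by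
  by_contra hne
  have hx := support_fderiv_subset ℝ (f := ⇑ψ) (Function.mem_support.2 hne)
  rw [ψ.tsupport_eq, Metric.mem_closedBall, dist_zero_right] at hx
  linarith

lemma bump_smul_eq_zero_outer {n : ℕ} (ψ : ContDiffBump (0 : 𝔼 n)) (R : ℝ) (hR : 0 < R)
    (x : 𝔼 n) (h : R * ψ.rOut < ‖x‖) : ψ (R⁻¹ • x) = 0 := by
  apply ψ.zero_of_le_dist
  rw [dist_zero_right, norm_inv_smul R hR, le_div_iff₀ hR]
  nlinarith

lemma component_integrable {n : ℕ} {F : (𝔼 n) → 𝔼 n} (hF : ContDiff ℝ 1 F)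
    (hFint : Integrable F volume) (j : Fin n) :
    Integrable (fun x => F x j) volume := by
  refine hFint.norm.mono' ?_ (ae_of_all _ fun x => ?_)
  · exact ((EuclideanSpace.proj (𝕜 := ℝ) j).continuous.comp hF.continuous).aestronglyMeasurable
  · simpa [Real.norm_eq_abs] using coord_abs_le_norm (F x) j

lemma component_fderiv {n : ℕ} {F : (𝔼 n) → 𝔼 n} (hF : ContDiff ℝ 1 F)
    (x v : 𝔼 n) (j : Fin n) :
    fderiv ℝ (fun x => F x j) x v = fderiv ℝ F x v j := by
  have h : (fun x => F x j) = (EuclideanSpace.proj (𝕜 := ℝ) j) ∘ F := rfl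
  rw [h, fderiv_comp x (EuclideanSpace.proj j).differentiableAt (hF.differentiable one_ne_zero x),
    ContinuousLinearMap.fderiv]
  rfl

lemma component_differentiable {n : ℕ} {F : (𝔼 n) → 𝔼 n} (hF : ContDiff ℝ 1 F) (j : Fin n) :
    Differentiable ℝ (fun x => F x j) :=
  (EuclideanSpace.proj (𝕜 := ℝ) j).differentiable.comp (hF.differentiable one_ne_zero)

section cutoff
variable {n : ℕ} {F : (𝔼 n) → 𝔼 n}


variable {n : ℕ} {F : (𝔼 n) → 𝔼 n} (hF : ContDiff ℝ 1 F)

-- the scaled bump times coordinate, and its derivative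
lemma cutoff_hasFDerivAt (ψ : ContDiffBump (0 : 𝔼 n)) (R : ℝ) (i : Fin n) (x : 𝔼 n) :
    HasFDerivAt (fun x : 𝔼 n => x i * ψ (R⁻¹ • x))
      (ψ (R⁻¹ • x) • (EuclideanSpace.proj (𝕜 := ℝ) i)
        + x i • (R⁻¹ • fderiv ℝ ψ (R⁻¹ • x))) x := by
  have h1 : HasFDerivAt (fun x : 𝔼 n => ψ (R⁻¹ • x))
      (R⁻¹ • fderiv ℝ ψ (R⁻¹ • x)) x := by
    have ha : HasFDerivAt ψ (fderiv ℝ ψ (R⁻¹ • x)) (R⁻¹ • x) :=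
      ((ψ.contDiff (n := 1)).differentiable (by simp) (R⁻¹ • x)).hasFDerivAt
    have hb : HasFDerivAt (fun x : 𝔼 n => R⁻¹ • x)
        (R⁻¹ • ContinuousLinearMap.id ℝ _) x := (hasFDerivAt_id x).const_smul R⁻¹
    have := ha.comp x hb
    refine this.congr_fderiv ?_
    ext v; simp
  have h2 : HasFDerivAt (fun x : 𝔼 n => x i)
      (EuclideanSpace.proj (𝕜 := ℝ) i) x := (EuclideanSpace.proj (𝕜 := ℝ) i).hasFDerivAt
  rw [add_comm]
  exact h2.mul h1

lemma cutoff_contDiff (ψ : ContDiffBump (0 : 𝔼 n)) (R : ℝ) (i : Fin n) :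
    ContDiff ℝ 1 (fun x : 𝔼 n => x i * ψ (R⁻¹ • x)) := by
  have h1 : ContDiff ℝ 1 (fun x : 𝔼 n => ψ (R⁻¹ • x)) :=
    (ψ.contDiff (n := 1)).comp (contDiff_const_smul R⁻¹)
  exact ((EuclideanSpace.proj (𝕜 := ℝ) i).contDiff (n := 1)).mul h1

lemma cutoff_hasCompactSupport (ψ : ContDiffBump (0 : 𝔼 n)) (R : ℝ) (hR : 0 < R) (i : Fin n) :
    HasCompactSupport (fun x : 𝔼 n => x i * ψ (R⁻¹ • x)) := by
  apply HasCompactSupport.intro (isCompact_closedBall (0 : 𝔼 n) (R * ψ.rOut))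
  intro x hx
  rw [Metric.mem_closedBall, dist_zero_right, not_le] at hx
  have : ψ (R⁻¹ • x) = 0 := by
    apply ψ.zero_of_le_dist
    rw [dist_zero_right, norm_smul, Real.norm_eq_abs, abs_inv, abs_of_pos hR, inv_mul_eq_div,
      le_div_iff₀ hR]
    nlinarith
  simp [this]


end cutoff


lemma key_identity {n : ℕ} {F : (𝔼 n) → 𝔼 n} (hF : ContDiff ℝ 1 F)
    (hFint : Integrable F volume)
    (hdiv : ∀ x : 𝔼 n, ∑ j : Fin n, fderiv ℝ F x (EuclideanSpace.single j 1) j = 0)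
    (i : Fin n) (ψ : ContDiffBump (0 : 𝔼 n)) (R : ℝ) (hR : 1 ≤ R) :
    ∫ x : 𝔼 n, ψ (R⁻¹ • x) * F x i
      = - ∑ j : Fin n, ∫ x : 𝔼 n,
          (x i * (R⁻¹ • fderiv ℝ ψ (R⁻¹ • x)) (EuclideanSpace.single j 1)) * F x j := by
  have hR0 : (0:ℝ) < R := by linarith
  set e : Fin n → (𝔼 n) := fun j => EuclideanSpace.single j 1 with he
  set fR : (𝔼 n) → ℝ := fun x => x i * ψ (R⁻¹ • x) with hfR
  have hd : ∀ x, HasFDerivAt fR (ψ (R⁻¹ • x) • (EuclideanSpace.proj (𝕜 := ℝ) i)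
        + x i • (R⁻¹ • fderiv ℝ ψ (R⁻¹ • x))) x := cutoff_hasFDerivAt ψ R i
  have hfd : ∀ x, fderiv ℝ fR x = ψ (R⁻¹ • x) • (EuclideanSpace.proj (𝕜 := ℝ) i)
        + x i • (R⁻¹ • fderiv ℝ ψ (R⁻¹ • x)) := fun x => (hd x).fderiv
  have hdiff : Differentiable ℝ fR := fun x => (hd x).differentiableAt
  have hcont : Continuous fR := (cutoff_contDiff ψ R i).continuous
  have hsupp : HasCompactSupport fR := cutoff_hasCompactSupport ψ R hR0 i
  obtain ⟨M, hM⟩ := hsupp.exists_bound_of_continuous hcont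
  -- derivative of fR : continuous, compactly supported, bounded
  have hDcont : Continuous (fderiv ℝ fR) := (cutoff_contDiff ψ R i).continuous_fderiv one_ne_zero
  obtain ⟨M', hM'⟩ := (hsupp.fderiv ℝ).exists_bound_of_continuous hDcont
  have hDj : ∀ j, Continuous (fun x => fderiv ℝ fR x (e j)) :=
    fun j => hDcont.clm_apply continuous_const
  have hDjb : ∀ j x, ‖fderiv ℝ fR x (e j)‖ ≤ M' := by
    intro j x
    calc ‖fderiv ℝ fR x (e j)‖ ≤ ‖fderiv ℝ fR x‖ * ‖e j‖ :=
          (fderiv ℝ fR x).le_opNorm (e j)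
    _ ≤ M' * 1 := by
          apply mul_le_mul (hM' x) ?_ (norm_nonneg _) ((norm_nonneg _).trans (hM' x))
          simp [he, EuclideanSpace.norm_single]
    _ = M' := mul_one M'
  -- continuity of fderiv of components
  have hgj_cont : ∀ j, Continuous (fun x => fderiv ℝ (fun y => F y j) x (e j)) := by
    intro j
    have : (fun x => fderiv ℝ (fun y => F y j) x (e j))
        = fun x => (EuclideanSpace.proj (𝕜 := ℝ) j) (fderiv ℝ F x (e j)) := by
      funext x
      rw [component_fderiv hF]
      rfl
    rw [this]
    exact (EuclideanSpace.proj (𝕜 := ℝ) j).continuous.comp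
      ((hF.continuous_fderiv one_ne_zero).clm_apply continuous_const)
  -- integrabilities
  have h1 : ∀ j, Integrable (fun x => fR x * fderiv ℝ (fun y => F y j) x (e j)) volume :=
    fun j => (hcont.mul (hgj_cont j)).integrable_of_hasCompactSupport hsupp.mul_right
  have h2 : ∀ j, Integrable (fun x => fderiv ℝ fR x (e j) * F x j) volume :=
    fun j => (component_integrable hF hFint j).bdd_mul (hDj j).aestronglyMeasurable
      (ae_of_all _ (hDjb j))
  have h3 : ∀ j, Integrable (fun x => fR x * F x j) volume :=
    fun j => (component_integrable hF hFint j).bdd_mul hcont.aestronglyMeasurable (ae_of_all _ hM)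
  have hIBP : ∀ j, ∫ x, fR x * fderiv ℝ (fun y => F y j) x (e j)
      = - ∫ x, fderiv ℝ fR x (e j) * F x j := fun j =>
    integral_mul_fderiv_eq_neg_fderiv_mul_of_integrable (h2 j) (h1 j) (h3 j) (fun x _ => hdiff x)
      (fun x _ => component_differentiable hF j x)
  -- sum of the left-hand sides is zero
  have hsum : ∑ j : Fin n, ∫ x, fR x * fderiv ℝ (fun y => F y j) x (e j) = 0 := by
    rw [← integral_finset_sum _ (fun j _ => h1 j)]
    have : ∀ x : 𝔼 n, ∑ j : Fin n, fR x * fderiv ℝ (fun y => F y j) x (e j) = 0 := by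
      intro x
      have : ∀ j : Fin n, fR x * fderiv ℝ (fun y => F y j) x (e j)
          = fR x * fderiv ℝ F x (e j) j := by
        intro j; rw [component_fderiv hF]
      rw [Finset.sum_congr rfl (fun j _ => this j), ← Finset.mul_sum, hdiv x, mul_zero]
    simp only [this, integral_zero]
  -- hence the sum of right-hand sides vanishes
  have hsum2 : ∑ j : Fin n, ∫ x, fderiv ℝ fR x (e j) * F x j = 0 := by
    have := hsum
    simp only [hIBP] at this
    rw [Finset.sum_neg_distrib] at this
    linarith [this]
  -- expand the derivative
  have hq_cont : ∀ j, Continuous (fun x : 𝔼 n =>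
      x i * (R⁻¹ • fderiv ℝ ψ (R⁻¹ • x)) (e j)) := by
    intro j
    have hψ' : Continuous (fderiv ℝ ψ) := (ψ.contDiff (n := 1)).continuous_fderiv (by simp)
    exact ((EuclideanSpace.proj (𝕜 := ℝ) i).continuous).mul
      (((hψ'.comp (continuous_const_smul R⁻¹)).const_smul R⁻¹).clm_apply continuous_const)
  obtain ⟨C, hC⟩ := (ψ.hasCompactSupport.fderiv ℝ).exists_bound_of_continuous
    ((ψ.contDiff (n := 1)).continuous_fderiv (by simp))
  have hC0 : 0 ≤ C := (norm_nonneg _).trans (hC 0)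
  have hq_bdd : ∀ j x, ‖x i * (R⁻¹ • fderiv ℝ ψ (R⁻¹ • x)) (e j)‖ ≤ ψ.rOut * C := by
    intro j x
    rcases le_or_gt ‖x‖ (R * ψ.rOut) with hx | hx
    · have h1 : |x i| ≤ R * ψ.rOut := (coord_abs_le_norm x i).trans hx
      have h2 : ‖(R⁻¹ • fderiv ℝ ψ (R⁻¹ • x)) (e j)‖ ≤ R⁻¹ * C := by
        calc ‖(R⁻¹ • fderiv ℝ ψ (R⁻¹ • x)) (e j)‖
            ≤ ‖R⁻¹ • fderiv ℝ ψ (R⁻¹ • x)‖ * ‖e j‖ := ContinuousLinearMap.le_opNorm _ _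
        _ = R⁻¹ * ‖fderiv ℝ ψ (R⁻¹ • x)‖ * 1 := by
            rw [norm_smul, Real.norm_eq_abs, abs_inv, abs_of_pos hR0]
            simp [he, EuclideanSpace.norm_single]
        _ ≤ R⁻¹ * C := by
            rw [mul_one]
            exact mul_le_mul_of_nonneg_left (hC _) (by positivity)
      calc ‖x i * (R⁻¹ • fderiv ℝ ψ (R⁻¹ • x)) (e j)‖
          = |x i| * ‖(R⁻¹ • fderiv ℝ ψ (R⁻¹ • x)) (e j)‖ := by
            rw [norm_mul, Real.norm_eq_abs]
      _ ≤ (R * ψ.rOut) * (R⁻¹ * C) :=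
            mul_le_mul h1 h2 (norm_nonneg _) (by nlinarith [ψ.rOut_pos])
      _ = ψ.rOut * C := by field_simp
    · have : fderiv ℝ ψ (R⁻¹ • x) = 0 := by
        apply fderiv_bump_eq_zero_outer
        rw [norm_smul, Real.norm_eq_abs, abs_inv, abs_of_pos hR0, inv_mul_eq_div,
          lt_div_iff₀ hR0]
        nlinarith [ψ.rOut_pos]
      simp [this]
      exact mul_nonneg ψ.rOut_pos.le hC0
  have hint2 : ∀ j, Integrable (fun x : 𝔼 n =>
      (x i * (R⁻¹ • fderiv ℝ ψ (R⁻¹ • x)) (e j)) * F x j) volume :=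
    fun j => (component_integrable hF hFint j).bdd_mul (hq_cont j).aestronglyMeasurable
      (ae_of_all _ (hq_bdd j))
  have hψcont : Continuous (fun x : 𝔼 n => ψ (R⁻¹ • x)) :=
    ψ.continuous.comp (continuous_const_smul R⁻¹)
  have hint1 : ∀ j, Integrable (fun x : 𝔼 n => (ψ (R⁻¹ • x) * (e j) i) * F x j) volume := by
    intro j
    refine (component_integrable hF hFint j).bdd_mul
      ((hψcont.mul continuous_const)).aestronglyMeasurable (c := 1) (ae_of_all _ fun x => ?_)
    rw [norm_mul]
    have h1 : ‖ψ (R⁻¹ • x)‖ ≤ 1 := by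
      rw [Real.norm_eq_abs, abs_of_nonneg (ψ.nonneg)]
      exact ψ.le_one
    have h2 : ‖(e j) i‖ ≤ 1 := by
      rw [he]
      simp only [EuclideanSpace.single_apply, Real.norm_eq_abs]
      split <;> simp
    calc ‖ψ (R⁻¹ • x)‖ * ‖(e j) i‖ ≤ 1 * 1 :=
      mul_le_mul h1 h2 (norm_nonneg _) zero_le_one
    _ = 1 := mul_one 1
  -- expand each term of hsum2
  have hexp : ∀ j, ∫ x, fderiv ℝ fR x (e j) * F x j
      = (∫ x, (ψ (R⁻¹ • x) * (e j) i) * F x j)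
        + ∫ x, (x i * (R⁻¹ • fderiv ℝ ψ (R⁻¹ • x)) (e j)) * F x j := by
    intro j
    rw [← integral_add (hint1 j) (hint2 j)]
    congr 1
    funext x
    rw [hfd x]
    simp only [ContinuousLinearMap.add_apply, ContinuousLinearMap.coe_smul', Pi.smul_apply,
      smul_eq_mul]
    have : (EuclideanSpace.proj (𝕜 := ℝ) i) (e j) = (e j) i := rfl
    rw [this]
    ring
  -- the δ-part sums to the bump integral
  have hdelta : ∑ j : Fin n, ∫ x, (ψ (R⁻¹ • x) * (e j) i) * F x j
      = ∫ x, ψ (R⁻¹ • x) * F x i := by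
    rw [Finset.sum_eq_single i]
    · congr 1; funext x
      have : (e i) i = 1 := by simp [he, EuclideanSpace.single_apply]
      rw [this, mul_one]
    · intro j _ hj
      have : (e j) i = 0 := by
        simp [he, EuclideanSpace.single_apply, hj.symm]
      simp [this]
    · intro h; exact absurd (Finset.mem_univ i) h
  have := hsum2
  simp only [hexp] at this
  rw [Finset.sum_add_distrib, hdelta] at this
  linarith


theorem integral_components_eq_zero_of_div_free
    (n : ℕ) (hn : 2 ≤ n)
    (F : EuclideanSpace ℝ (Fin n) → EuclideanSpace ℝ (Fin n))
    (hF : ContDiff ℝ 1 F)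
    (hFint : Integrable F volume)
    (hdiv : ∀ x : EuclideanSpace ℝ (Fin n),
      ∑ i : Fin n, fderiv ℝ F x (EuclideanSpace.single i 1) i = 0) :
    ∀ i : Fin n, ∫ x : EuclideanSpace ℝ (Fin n), F x i = 0 := by
  intro i
  set ψ : ContDiffBump (0 : 𝔼 n) := ⟨1, 2, one_pos, one_lt_two⟩ with hψdef
  have hrIn : ψ.rIn = 1 := rfl
  have hrOut : ψ.rOut = 2 := rfl
  obtain ⟨C, hC⟩ := (ψ.hasCompactSupport.fderiv ℝ).exists_bound_of_continuous
    ((ψ.contDiff (n := 1)).continuous_fderiv (by simp))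
  have hC0 : 0 ≤ C := (norm_nonneg _).trans (hC 0)
  have hψcont : Continuous (⇑ψ) := ψ.continuous
  have hFcont : Continuous F := hF.continuous
  have hFj : Integrable (fun x : 𝔼 n => F x i) volume := component_integrable hF hFint i
  set A : ℕ → ℝ := fun k => ∫ x : 𝔼 n, ψ (((k:ℝ)+1)⁻¹ • x) * F x i with hA
  have hnorm_smul : ∀ (R : ℝ), 0 < R → ∀ x : 𝔼 n, ‖R⁻¹ • x‖ = ‖x‖ / R := by
    intro R hR x
    rw [norm_smul, Real.norm_eq_abs, abs_inv, abs_of_pos hR, inv_mul_eq_div]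
  -- first limit : A → ∫ F_i
  have hA1 : Tendsto A atTop (nhds (∫ x : 𝔼 n, F x i)) := by
    apply tendsto_integral_of_dominated_convergence (bound := fun x => ‖F x‖)
    · intro k
      exact ((hψcont.comp (continuous_const_smul _)).mul
        ((EuclideanSpace.proj (𝕜 := ℝ) i).continuous.comp hFcont)).aestronglyMeasurable
    · exact hFint.norm
    · intro k
      filter_upwards with x
      rw [norm_mul]
      have h1 : ‖ψ (((k:ℝ)+1)⁻¹ • x)‖ ≤ 1 := by
        rw [Real.norm_eq_abs, abs_of_nonneg ψ.nonneg]; exact ψ.le_one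
      have h2 : ‖F x i‖ ≤ ‖F x‖ := by
        simpa [Real.norm_eq_abs] using coord_abs_le_norm (F x) i
      calc ‖ψ (((k:ℝ)+1)⁻¹ • x)‖ * ‖F x i‖ ≤ 1 * ‖F x‖ :=
        mul_le_mul h1 h2 (norm_nonneg _) zero_le_one
      _ = ‖F x‖ := one_mul _
    · filter_upwards with x
      apply Tendsto.congr' (f₁ := fun _ : ℕ => F x i) _ tendsto_const_nhds
      filter_upwards [eventually_ge_atTop ⌈‖x‖⌉₊] with k hk
      have hxk : ‖x‖ ≤ (k:ℝ) + 1 := by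
        calc ‖x‖ ≤ (⌈‖x‖⌉₊ : ℝ) := Nat.le_ceil _
        _ ≤ (k:ℝ) := by exact_mod_cast hk
        _ ≤ (k:ℝ) + 1 := by linarith
      have : ψ (((k:ℝ)+1)⁻¹ • x) = 1 := by
        apply ψ.one_of_mem_closedBall
        rw [Metric.mem_closedBall, dist_zero_right, hnorm_smul _ (by positivity), hrIn,
          div_le_one (by positivity)]
        exact hxk
      rw [this, one_mul]
  -- second limit : A → 0
  have hG_int : ∀ k : ℕ, Integrable
      (Set.indicator {y : 𝔼 n | (k:ℝ)+1 ≤ ‖y‖} (fun y => (ψ.rOut * C) * ‖F y‖)) volume := by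
    intro k
    apply Integrable.indicator
    · exact hFint.norm.const_mul _
    · exact (isClosed_le continuous_const continuous_norm).measurableSet
  have hbnd : ∀ (k : ℕ) (j : Fin n) (x : 𝔼 n),
      ‖(x i * ((((k:ℝ)+1))⁻¹ • fderiv ℝ ψ ((((k:ℝ)+1))⁻¹ • x)) (EuclideanSpace.single j 1))
          * F x j‖
        ≤ Set.indicator {y : 𝔼 n | (k:ℝ)+1 ≤ ‖y‖} (fun y => (ψ.rOut * C) * ‖F y‖) x := by
    intro k j x
    set R : ℝ := (k:ℝ)+1 with hRdef
    have hR0 : (0:ℝ) < R := by positivity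
    rcases lt_or_ge ‖x‖ R with hx | hx
    · have h0 : fderiv ℝ ψ (R⁻¹ • x) = 0 := by
        apply fderiv_bump_eq_zero_inner
        rw [hnorm_smul R hR0, hrIn, div_lt_one hR0]
        exact hx
      have : Set.indicator {y : 𝔼 n | R ≤ ‖y‖} (fun y => (ψ.rOut * C) * ‖F y‖) x = 0 := by
        apply Set.indicator_of_notMem
        simpa using hx
      rw [this, h0]
      simp
    · have hmem : x ∈ {y : 𝔼 n | R ≤ ‖y‖} := hx
      rw [Set.indicator_of_mem hmem]
      have hq : ‖x i * ((R⁻¹ • fderiv ℝ ψ (R⁻¹ • x)) (EuclideanSpace.single j 1))‖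
          ≤ ψ.rOut * C := by
        rcases le_or_gt ‖x‖ (R * ψ.rOut) with hx2 | hx2
        · have h1 : |x i| ≤ R * ψ.rOut := (coord_abs_le_norm x i).trans hx2
          have h2 : ‖(R⁻¹ • fderiv ℝ ψ (R⁻¹ • x)) (EuclideanSpace.single j 1)‖ ≤ R⁻¹ * C := by
            calc ‖(R⁻¹ • fderiv ℝ ψ (R⁻¹ • x)) (EuclideanSpace.single j 1)‖
                ≤ ‖R⁻¹ • fderiv ℝ ψ (R⁻¹ • x)‖ * ‖(EuclideanSpace.single j (1:ℝ) : 𝔼 n)‖ :=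
                  ContinuousLinearMap.le_opNorm _ _
            _ = R⁻¹ * ‖fderiv ℝ ψ (R⁻¹ • x)‖ * 1 := by
                rw [norm_smul, Real.norm_eq_abs, abs_inv, abs_of_pos hR0,
                  EuclideanSpace.norm_single, norm_one]
            _ ≤ R⁻¹ * C := by
                rw [mul_one]
                exact mul_le_mul_of_nonneg_left (hC _) (by positivity)
          calc ‖x i * ((R⁻¹ • fderiv ℝ ψ (R⁻¹ • x)) (EuclideanSpace.single j 1))‖
              = |x i| * ‖(R⁻¹ • fderiv ℝ ψ (R⁻¹ • x)) (EuclideanSpace.single j 1)‖ := by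
                rw [norm_mul, Real.norm_eq_abs]
          _ ≤ (R * ψ.rOut) * (R⁻¹ * C) :=
                mul_le_mul h1 h2 (norm_nonneg _) (by nlinarith [ψ.rOut_pos])
          _ = ψ.rOut * C := by field_simp
        · have h0 : fderiv ℝ ψ (R⁻¹ • x) = 0 := by
            apply fderiv_bump_eq_zero_outer
            rw [hnorm_smul R hR0, lt_div_iff₀ hR0]
            nlinarith
          rw [h0]
          simp only [smul_zero, ContinuousLinearMap.zero_apply, mul_zero, norm_zero]
          exact mul_nonneg ψ.rOut_pos.le hC0
      calc ‖(x i * ((R⁻¹ • fderiv ℝ ψ (R⁻¹ • x)) (EuclideanSpace.single j 1))) * F x j‖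
          = ‖x i * ((R⁻¹ • fderiv ℝ ψ (R⁻¹ • x)) (EuclideanSpace.single j 1))‖ * ‖F x j‖ :=
            norm_mul _ _
      _ ≤ (ψ.rOut * C) * ‖F x‖ := by
            apply mul_le_mul hq _ (norm_nonneg _) (mul_nonneg ψ.rOut_pos.le hC0)
            simpa [Real.norm_eq_abs] using coord_abs_le_norm (F x) j
  -- the tail integrals tend to zero
  have hI0 : Tendsto (fun k : ℕ => ∫ x : 𝔼 n,
      Set.indicator {y : 𝔼 n | (k:ℝ)+1 ≤ ‖y‖} (fun y => (ψ.rOut * C) * ‖F y‖) x)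
      atTop (nhds 0) := by
    have h := tendsto_integral_of_dominated_convergence
      (F := fun k : ℕ => Set.indicator {y : 𝔼 n | (k:ℝ)+1 ≤ ‖y‖}
        (fun y => (ψ.rOut * C) * ‖F y‖))
      (f := fun _ : 𝔼 n => (0:ℝ)) (bound := fun x => (ψ.rOut * C) * ‖F x‖)
      (fun k => (hG_int k).aestronglyMeasurable) (hFint.norm.const_mul _)
      (fun k => by
        filter_upwards with x
        rw [Real.norm_eq_abs, abs_of_nonneg]
        · exact Set.indicator_le_self' (fun y _ => mul_nonneg (mul_nonneg ψ.rOut_pos.le hC0)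
            (norm_nonneg _)) x
        · exact Set.indicator_nonneg (fun y _ => mul_nonneg (mul_nonneg ψ.rOut_pos.le hC0)
            (norm_nonneg _)) x)
      (by
        filter_upwards with x
        apply Tendsto.congr' (f₁ := fun _ : ℕ => (0:ℝ)) _ tendsto_const_nhds
        filter_upwards [eventually_ge_atTop ⌈‖x‖⌉₊] with k hk
        symm
        apply Set.indicator_of_notMem
        simp only [Set.mem_setOf_eq, not_le]
        calc ‖x‖ ≤ (⌈‖x‖⌉₊ : ℝ) := Nat.le_ceil _
        _ ≤ (k:ℝ) := by exact_mod_cast hk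
        _ < (k:ℝ) + 1 := by linarith)
    simpa using h
  have hA2 : Tendsto A atTop (nhds 0) := by
    apply squeeze_zero_norm (a := fun k : ℕ => (n:ℝ) * ∫ x : 𝔼 n,
      Set.indicator {y : 𝔼 n | (k:ℝ)+1 ≤ ‖y‖} (fun y => (ψ.rOut * C) * ‖F y‖) x)
    · intro k
      have hkey := key_identity hF hFint hdiv i ψ ((k:ℝ)+1) (by norm_num)
      rw [hA]
      simp only
      rw [hkey, norm_neg]
      calc ‖∑ j : Fin n, ∫ x : 𝔼 n,
            (x i * ((((k:ℝ)+1))⁻¹ • fderiv ℝ ψ ((((k:ℝ)+1))⁻¹ • x))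
              (EuclideanSpace.single j 1)) * F x j‖
          ≤ ∑ j : Fin n, ‖∫ x : 𝔼 n,
            (x i * ((((k:ℝ)+1))⁻¹ • fderiv ℝ ψ ((((k:ℝ)+1))⁻¹ • x))
              (EuclideanSpace.single j 1)) * F x j‖ := norm_sum_le _ _
      _ ≤ ∑ _j : Fin n, ∫ x : 𝔼 n,
            Set.indicator {y : 𝔼 n | (k:ℝ)+1 ≤ ‖y‖} (fun y => (ψ.rOut * C) * ‖F y‖) x := by
            apply Finset.sum_le_sum
            intro j _
            exact norm_integral_le_of_norm_le (hG_int k) (ae_of_all _ (hbnd k j))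
      _ = (n:ℝ) * ∫ x : 𝔼 n,
            Set.indicator {y : 𝔼 n | (k:ℝ)+1 ≤ ‖y‖} (fun y => (ψ.rOut * C) * ‖F y‖) x := by
            rw [Finset.sum_const, Finset.card_univ, Fintype.card_fin, nsmul_eq_mul]
    · have := hI0.const_mul (n:ℝ)
      simpa using this
  exact tendsto_nhds_unique hA1 hA2
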